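/- arXiv:2509.07271 — 2 statements merged into one kernel-verified Lean document; each statement's English description precedes it below -/
import Mathlib

section
/- Minimax characterization of type II errors for CQ channels: For any ε ≥ 0, any family 𝓕 of sets of free CQ channels satisfying Axioms CQ2 and CQ4, and any CQ channel Φ : X → D(H), it holds that β_ε(Φ‖𝓕) = max_{Φ_free ∈ 𝓕} β_ε(Φ‖Φ_free). -/
open scoped Kronecker
open Filter Matrix
open scoped ComplexOrder

attribute [local instance] Classical.propDecidable

noncomputable section

namespace CQ

variable {X d : Type*}

/-- Apply a real function to a matrix via its spectral decomposition (junk value `0` if the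
matrix is not Hermitian).  For positive semidefinite matrices and `f 0 = 0` this realizes the
"on-support" functional calculus. -/
def matFun [Fintype d] [DecidableEq d] (f : ℝ → ℝ) (A : Matrix d d ℂ) : Matrix d d ℂ :=
  if hA : A.IsHermitian then
    (hA.eigenvectorUnitary : Matrix d d ℂ) *
      Matrix.diagonal (fun i => (f (hA.eigenvalues i) : ℂ)) *
      star (hA.eigenvectorUnitary : Matrix d d ℂ)
  else 0

/-- Matrix logarithm taken on the support. -/
def matLog [Fintype d] [DecidableEq d] (A : Matrix d d ℂ) : Matrix d d ℂ := matFun Real.log A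

/-- Real matrix power taken on the support. -/
def matRpow [Fintype d] [DecidableEq d] (A : Matrix d d ℂ) (r : ℝ) : Matrix d d ℂ :=
  matFun (fun t => t ^ r) A

/-- Projection `{A ≥ 0}` onto the eigenspaces of nonnegative eigenvalues of a Hermitian matrix. -/
def posProj [Fintype d] [DecidableEq d] (A : Matrix d d ℂ) : Matrix d d ℂ :=
  matFun (fun t => if 0 ≤ t then 1 else 0) A

/-- `supp A ⊆ supp B`, expressed via ranges. -/
def suppLE [Fintype d] [DecidableEq d] (A B : Matrix d d ℂ) : Prop :=
  LinearMap.range (Matrix.toLin' A) ≤ LinearMap.range (Matrix.toLin' B)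

/-- Quantum (Umegaki) relative entropy, with value `⊤` when the support condition fails. -/
def qRelEntropy [Fintype d] [DecidableEq d] (ρ σ : Matrix d d ℂ) : EReal :=
  if suppLE ρ σ then (((ρ * (matLog ρ - matLog σ)).trace.re : ℝ) : EReal) else ⊤

/-- Sandwiched Rényi relative entropy of order `α`, with value `⊤` when the support condition
fails. -/
def sandRenyi [Fintype d] [DecidableEq d] (α : ℝ) (ρ σ : Matrix d d ℂ) : EReal :=
  if suppLE ρ σ then
    ((((α - 1)⁻¹ *
        Real.log ((matRpow (matRpow σ ((1 - α) / (2 * α)) * ρ *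
          matRpow σ ((1 - α) / (2 * α))) α).trace.re)) : ℝ) : EReal)
  else ⊤

/-- A CQ channel: every output is a density operator. -/
def IsCQChannel [Fintype d] (Φ : X → Matrix d d ℂ) : Prop :=
  ∀ x, (Φ x).PosSemidef ∧ (Φ x).trace = 1

/-- Channel divergence `D(Φ₁‖Φ₂) = max_x D(Φ₁(x)‖Φ₂(x))`. -/
def chDiv [Fintype X] [Fintype d] [DecidableEq d] (Φ₁ Φ₂ : X → Matrix d d ℂ) : EReal :=
  ⨆ x, qRelEntropy (Φ₁ x) (Φ₂ x)

/-- Sandwiched Rényi channel divergence. -/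
def chRenyiDiv [Fintype X] [Fintype d] [DecidableEq d] (α : ℝ) (Φ₁ Φ₂ : X → Matrix d d ℂ) :
    EReal :=
  ⨆ x, sandRenyi α (Φ₁ x) (Φ₂ x)

/-- `D(Φ‖𝓕) = min_{Φf ∈ 𝓕} D(Φ‖Φf)`. -/
def chDivSet [Fintype X] [Fintype d] [DecidableEq d] (Φ : X → Matrix d d ℂ)
    (S : Set (X → Matrix d d ℂ)) : EReal :=
  ⨅ Φf ∈ S, chDiv Φ Φf

/-- `D̃_α(Φ‖𝓕) = min_{Φf ∈ 𝓕} D̃_α(Φ‖Φf)`. -/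
def chRenyiDivSet [Fintype X] [Fintype d] [DecidableEq d] (α : ℝ) (Φ : X → Matrix d d ℂ)
    (S : Set (X → Matrix d d ℂ)) : EReal :=
  ⨅ Φf ∈ S, chRenyiDiv α Φ Φf

/-- Probability distribution on a finite alphabet. -/
def IsProbDist [Fintype X] (p : X → ℝ) : Prop := (∀ x, 0 ≤ p x) ∧ ∑ x, p x = 1

/-- POVM element: `0 ≤ T ≤ 1`. -/
def IsPOVMElem [Fintype d] [DecidableEq d] (T : Matrix d d ℂ) : Prop :=
  T.PosSemidef ∧ (1 - T).PosSemidef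

/-- Type-I error of the test `(p, {T_x})` for the channel `Φ`. -/
def typeIErrVal [Fintype X] [Fintype d] [DecidableEq d] (Φ : X → Matrix d d ℂ) (p : X → ℝ)
    (T : X → Matrix d d ℂ) : ℝ :=
  ∑ x, p x * ((1 - T x) * Φ x).trace.re

/-- Optimal type-II error `β_ε(Φ₁‖Φ₂)` between two CQ channels. -/
def typeIIErr [Fintype X] [Fintype d] [DecidableEq d] (ε : ℝ) (Φ₁ Φ₂ : X → Matrix d d ℂ) : ℝ :=
  sInf { v | ∃ p T, IsProbDist p ∧ (∀ x, IsPOVMElem (T x)) ∧ typeIErrVal Φ₁ p T ≤ ε ∧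
    v = ∑ x, p x * (T x * Φ₂ x).trace.re }

/-- Optimal type-II error `β_ε(Φ‖𝓕)` against a set of CQ channels. -/
def typeIIErrSet [Fintype X] [Fintype d] [DecidableEq d] (ε : ℝ) (Φ : X → Matrix d d ℂ)
    (S : Set (X → Matrix d d ℂ)) : ℝ :=
  sInf { v | ∃ p T, IsProbDist p ∧ (∀ x, IsPOVMElem (T x)) ∧ typeIErrVal Φ p T ≤ ε ∧
    v = sSup { w | ∃ Φf ∈ S, w = ∑ x, p x * (T x * Φf x).trace.re } }

/-- Tensor product of two CQ channels. -/
def prodChannel {X' d' : Type*} (Φ : X → Matrix d d ℂ) (Φ' : X' → Matrix d' d' ℂ) :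
    X × X' → Matrix (d × d') (d × d') ℂ :=
  fun x => Φ x.1 ⊗ₖ Φ' x.2

/-- `n`-fold tensor power `Φ^{⊗n}` of a CQ channel, realized entrywise. -/
def powChannel (Φ : X → Matrix d d ℂ) (n : ℕ) :
    (Fin n → X) → Matrix (Fin n → d) (Fin n → d) ℂ :=
  fun xs => Matrix.of fun i j => ∏ k, Φ (xs k) (i k) (j k)

def finEquiv (n m : ℕ) (γ : Type*) : ((Fin n → γ) × (Fin m → γ)) ≃ (Fin (n + m) → γ) :=
  (Equiv.sumArrowEquivProdArrow (Fin n) (Fin m) γ).symm.trans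
    (Equiv.arrowCongr finSumFinEquiv (Equiv.refl γ))

/-- Tensor product of an `n`-fold and an `m`-fold CQ channel, as an `(n+m)`-fold CQ channel. -/
def cqTensor {n m : ℕ} (Φ : (Fin n → X) → Matrix (Fin n → d) (Fin n → d) ℂ)
    (Ψ : (Fin m → X) → Matrix (Fin m → d) (Fin m → d) ℂ) :
    (Fin (n + m) → X) → Matrix (Fin (n + m) → d) (Fin (n + m) → d) ℂ :=
  fun xs =>
    Matrix.reindex (finEquiv n m d) (finEquiv n m d)
      (Φ ((finEquiv n m X).symm xs).1 ⊗ₖ Ψ ((finEquiv n m X).symm xs).2)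

/-- All members of the family are CQ channels. -/
def FamilyCQ [Fintype d]
    (F : (n : ℕ) → Set ((Fin n → X) → Matrix (Fin n → d) (Fin n → d) ℂ)) : Prop :=
  ∀ n, ∀ Φ ∈ F n, IsCQChannel Φ

/-- Axiom CQ1: each set contains a CQ channel whose outputs are all full-rank,
equivalently bounded below by `Λ·I` for some `Λ ∈ (0,1]`. -/
def AxCQ1 [Fintype d] [DecidableEq d]
    (F : (n : ℕ) → Set ((Fin n → X) → Matrix (Fin n → d) (Fin n → d) ℂ)) : Prop :=
  ∀ n, ∃ Φfull ∈ F n, ∃ Λ : ℝ, 0 < Λ ∧ Λ ≤ 1 ∧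
    ∀ xs, (Φfull xs - Λ • (1 : Matrix (Fin n → d) (Fin n → d) ℂ)).PosSemidef

/-- Axiom CQ2: each set is compact. -/
def AxCQ2 (F : (n : ℕ) → Set ((Fin n → X) → Matrix (Fin n → d) (Fin n → d) ℂ)) : Prop :=
  ∀ n, IsCompact (F n)

/-- Axiom CQ3: the family is closed under tensor products. -/
def AxCQ3 (F : (n : ℕ) → Set ((Fin n → X) → Matrix (Fin n → d) (Fin n → d) ℂ)) : Prop :=
  ∀ n m, ∀ Φ ∈ F n, ∀ Ψ ∈ F m, cqTensor Φ Ψ ∈ F (n + m)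

/-- Axiom CQ4: each set is convex. -/
def AxCQ4 (F : (n : ℕ) → Set ((Fin n → X) → Matrix (Fin n → d) (Fin n → d) ℂ)) : Prop :=
  ∀ n, Convex ℝ (F n)

/-- Single-set version of Axiom CQ1. -/
def SetCQ1 [Fintype d] [DecidableEq d] (S : Set (X → Matrix d d ℂ)) : Prop :=
  ∃ Φfull ∈ S, ∃ Λ : ℝ, 0 < Λ ∧ Λ ≤ 1 ∧ ∀ x, (Φfull x - Λ • (1 : Matrix d d ℂ)).PosSemidef

/-- Trace distance `(1/2)‖A−B‖₁` (for Hermitian differences; junk `0` otherwise). -/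
def traceDist [Fintype d] [DecidableEq d] (A B : Matrix d d ℂ) : ℝ :=
  if h : (A - B).IsHermitian then (1 / 2) * ∑ i, |h.eigenvalues i| else 0

/-- Diamond distance between CQ channels. -/
def diamondDist [Fintype X] [Fintype d] [DecidableEq d] (Φ₁ Φ₂ : X → Matrix d d ℂ) : ℝ :=
  ⨆ x, traceDist (Φ₁ x) (Φ₂ x)

/-- Generalized robustness of a CQ channel with respect to a set of free CQ channels. -/
def genRobustness [Fintype X] [Fintype d] (S : Set (X → Matrix d d ℂ))
    (Φ : X → Matrix d d ℂ) : ℝ :=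
  sInf { s | 0 ≤ s ∧ ∃ Φ' : X → Matrix d d ℂ, IsCQChannel Φ' ∧
    (fun x => (1 + s)⁻¹ • (Φ x + s • Φ' x)) ∈ S }

/-- `N ⊗ id_k` acting blockwise. -/
def tensorIdMap {din dout : Type*}
    (N : Matrix din din ℂ →ₗ[ℂ] Matrix dout dout ℂ) (k : Type*)
    (M : Matrix (din × k) (din × k) ℂ) : Matrix (dout × k) (dout × k) ℂ :=
  Matrix.of fun a b => N (Matrix.of fun i j => M (i, a.2) (j, b.2)) a.1 b.1

/-- Completely positive and trace preserving linear map on matrices. -/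
def IsCPTP {din dout : Type*} [Fintype din] [Fintype dout]
    (N : Matrix din din ℂ →ₗ[ℂ] Matrix dout dout ℂ) : Prop :=
  (∀ (k : Type) [Fintype k], ∀ M : Matrix (din × k) (din × k) ℂ,
      M.PosSemidef → (tensorIdMap N k M).PosSemidef) ∧
  ∀ M : Matrix din din ℂ, (N M).trace = M.trace

/-- Action `(Θ ⊗ id)[Φ]` of a superchannel (given by `p_Θ` and CPTP maps `N`) on a CQ channel
with auxiliary classical input and quantum output. -/
def superAct {Xin Xout Xaux din dout daux : Type*} [Fintype Xin]
    (p : Xout → Xin → ℝ)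
    (N : Xin → Xout → Matrix din din ℂ →ₗ[ℂ] Matrix dout dout ℂ)
    (Φ : Xin × Xaux → Matrix (din × daux) (din × daux) ℂ) :
    Xout × Xaux → Matrix (dout × daux) (dout × daux) ℂ :=
  fun x => ∑ xi : Xin, p x.1 xi • tensorIdMap (N xi x.1) daux (Φ (xi, x.2))

/-- The index `b·M + m` of the `m`-th member of the `b`-th complete block of size `M`. -/
def grpIdx {n M : ℕ} (b : Fin (n / M)) (m : Fin M) : Fin n :=
  ⟨(b : ℕ) * M + m, by
    have h1 : ((b : ℕ) + 1) * M ≤ n / M * M :=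
      Nat.mul_le_mul_right M b.2
    have h3 : n / M * M ≤ n := Nat.div_mul_le_self n M
    have h4 : (m : ℕ) < M := m.2
    have h5 : (b : ℕ) * M + M ≤ n := by rw [add_mul, one_mul] at h1; omega
    omega⟩

/-- The index `(n/M)·M + k` of the `k`-th leftover position. -/
def remIdx {n M : ℕ} (k : Fin (n % M)) : Fin n :=
  ⟨n / M * M + k, by
    have h1 : n / M * M + n % M = n := by rw [mul_comm]; exact Nat.div_add_mod n M
    have h2 : (k : ℕ) < n % M := k.2
    omega⟩

/-- The channel `(Φ₂^{(M)})^{⊗ (n/M)} ⊗ Φfull^{⊗ (n % M)}`, realized entrywise on `n` tensor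
factors grouped into blocks of size `M` followed by the leftover factors. -/
def mixedPow {M : ℕ} (Φ₂M : (Fin M → X) → Matrix (Fin M → d) (Fin M → d) ℂ)
    (Φfull : X → Matrix d d ℂ) (n : ℕ) :
    (Fin n → X) → Matrix (Fin n → d) (Fin n → d) ℂ :=
  fun xs => Matrix.of fun i j =>
    (∏ b : Fin (n / M), Φ₂M (fun m => xs (grpIdx b m)) (fun m => i (grpIdx b m))
        (fun m => j (grpIdx b m))) *
    (∏ k : Fin (n % M), Φfull (xs (remIdx k)) (i (remIdx k)) (j (remIdx k)))



section AuxMinimax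

set_option linter.unusedSectionVars false
set_option linter.unusedVariables false

/-- Bilinear minimax inequality: there is a point of `K` whose sup over `S` is at most
`sup_{s∈S} inf_{k∈K} f k s`. -/
lemma minimax_exists {E F : Type*}
    [AddCommGroup E] [Module ℝ E] [TopologicalSpace E]
    [AddCommGroup F] [Module ℝ F]
    (f : E →ₗ[ℝ] F →ₗ[ℝ] ℝ) (hc : ∀ s : F, Continuous fun k : E => f k s)
    (K : Set E) (hKc : IsCompact K) (hKne : K.Nonempty) (hKconv : Convex ℝ K)
    (S : Set F) (hSne : S.Nonempty) (hSconv : Convex ℝ S)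
    (hbdd : BddAbove {w : ℝ | ∃ s ∈ S, w = sInf {v : ℝ | ∃ k ∈ K, v = f k s}}) :
    ∃ k ∈ K, ∀ s ∈ S,
      f k s ≤ sSup {w : ℝ | ∃ s ∈ S, w = sInf {v : ℝ | ∃ k ∈ K, v = f k s}} := by
  set α := sSup {w : ℝ | ∃ s ∈ S, w = sInf {v : ℝ | ∃ k ∈ K, v = f k s}} with hα
  by_contra hcon
  push_neg at hcon
  -- every k ∈ K has some s ∈ S with f k s > α
  have hcov : K ⊆ ⋃ s : S, (fun k : E => f k s.1) ⁻¹' Set.Ioi α := by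
    intro k hk
    obtain ⟨s, hs, hfs⟩ := hcon k hk
    exact Set.mem_iUnion.2 ⟨⟨s, hs⟩, hfs⟩
  obtain ⟨t, ht⟩ := hKc.elim_finite_subcover (fun s : S => (fun k : E => f k s.1) ⁻¹' Set.Ioi α)
    (fun s => (isOpen_Ioi).preimage (hc s.1)) hcov
  have htne : t.Nonempty := by
    obtain ⟨k₀, hk₀⟩ := hKne
    obtain ⟨i, hi, _⟩ := Set.mem_iUnion₂.1 (ht hk₀)
    exact ⟨i, hi⟩
  -- the linear map into ℝ^t
  classical
  let g : E →ₗ[ℝ] (t → ℝ) := LinearMap.pi fun i : t => f.flip i.1.1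
  -- separate g '' K from the lower-left quadrant
  have hCc : IsCompact (g '' K) := hKc.image (continuous_pi fun i => hc i.1.1)
  have hCconv : Convex ℝ (g '' K) := hKconv.linear_image g
  let Q : Set (t → ℝ) := {y | ∀ i, y i ≤ α}
  have hQconv : Convex ℝ Q := by
    intro y hy z hz a b ha hb hab i
    have h1 : a * y i + b * z i ≤ a * α + b * α :=
      add_le_add (mul_le_mul_of_nonneg_left (hy i) ha) (mul_le_mul_of_nonneg_left (hz i) hb)
    have h2 : a * α + b * α = α := by rw [← add_mul, hab, one_mul]
    simpa [h2] using h1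
  have hQclosed : IsClosed Q := by
    have : Q = ⋂ i : t, (fun y : t → ℝ => y i) ⁻¹' Set.Iic α := by
      ext y; simp [Q, Set.mem_iInter]
    rw [this]
    exact isClosed_iInter fun i => isClosed_Iic.preimage (continuous_apply i)
  have hdisj : Disjoint (g '' K) Q := by
    rw [Set.disjoint_left]
    rintro y ⟨k, hk, rfl⟩ hyQ
    obtain ⟨i, hi, hki⟩ := Set.mem_iUnion₂.1 (ht hk)
    exact absurd (hyQ ⟨i, hi⟩) (not_le.2 hki)
  obtain ⟨lam, u, v, hu, huv, hv⟩ :=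
    geometric_hahn_banach_compact_closed hCconv hCc hQconv hQclosed hdisj
  -- coefficients
  set μ : t → ℝ := fun i => -(lam (Pi.single i 1)) with hμ
  have hlam : ∀ y : t → ℝ, lam y = -∑ i, y i * μ i := by
    intro y
    have := LinearMap.pi_apply_eq_sum_univ (lam : (t → ℝ) →ₗ[ℝ] ℝ) y
    simp only [ContinuousLinearMap.coe_coe] at this
    rw [this, ← Finset.sum_neg_distrib]
    refine Finset.sum_congr rfl fun i _ => ?_
    have : (fun j => if i = j then (1:ℝ) else 0) = Pi.single i 1 := by
      ext j; by_cases h : i = j <;> simp [Pi.single_apply, h, eq_comm]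
    rw [this]; simp [μ, mul_comm]
  have hconstQ : (fun _ : t => α) ∈ Q := fun i => le_refl α
  have hvlt : v < lam (fun _ => α) := hv _ hconstQ
  -- each μ i is nonnegative
  have hμnn : ∀ i, 0 ≤ μ i := by
    intro i
    by_contra hneg
    push_neg at hneg
    set r : ℝ := (lam (fun _ => α) - v) / (-μ i) with hr
    have hrpos : 0 < r := div_pos (by linarith) (by linarith)
    have hmem : ((fun _ : t => α) - r • (Pi.single i 1 : t → ℝ)) ∈ Q := by
      intro j
      simp only [Pi.sub_apply, Pi.smul_apply, smul_eq_mul]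
      have : 0 ≤ r * (Pi.single i 1 : t → ℝ) j := by
        refine mul_nonneg hrpos.le ?_
        by_cases h : j = i <;> simp [Pi.single_apply, h]
      linarith
    have hineq := hv _ hmem
    rw [lam.map_sub, lam.map_smul] at hineq
    have hlams : lam (Pi.single i 1) = -μ i := by simp only [hμ, neg_neg]
    rw [hlams] at hineq
    simp only [smul_eq_mul] at hineq
    rw [hr] at hineq
    have hne : -μ i ≠ 0 := by linarith
    rw [div_mul_cancel₀ _ hne] at hineq
    linarith
  -- total mass is positive
  have hμsum : 0 < ∑ i, μ i := by
    have hnz : ∃ i, μ i ≠ 0 := by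
      by_contra hall
      push_neg at hall
      obtain ⟨k₀, hk₀⟩ := hKne
      have h0 : ∀ y : t → ℝ, lam y = 0 := by
        intro y; rw [hlam]; simp [hall]
      have h1 := hu _ ⟨k₀, hk₀, rfl⟩
      have h2 := hvlt
      rw [h0] at h1; rw [h0] at h2
      linarith
    obtain ⟨i, hi⟩ := hnz
    exact Finset.sum_pos' (fun j _ => hμnn j)
      ⟨i, Finset.mem_univ i, lt_of_le_of_ne (hμnn i) (Ne.symm hi)⟩
  -- the mixed strategy
  set s' : F := ∑ i : t, ((∑ j, μ j)⁻¹ * μ i) • (i.1.1 : F) with hs'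
  have hs'S : s' ∈ S := by
    refine hSconv.sum_mem (fun i _ => mul_nonneg (inv_nonneg.2 hμsum.le) (hμnn i)) ?_
      (fun i _ => i.1.2)
    rw [← Finset.mul_sum, inv_mul_cancel₀ hμsum.ne']
  -- for every k ∈ K, f k s' > α
  have hgt : ∀ k ∈ K, α < f k s' := by
    intro k hk
    have h1 : lam (g k) < u := hu _ ⟨k, hk, rfl⟩
    have h2 : v < lam (fun _ => α) := hvlt
    rw [hlam] at h1 h2
    have hg : ∀ i : t, g k i = f k i.1.1 := fun i => rfl
    simp only [hg] at h1
    have hsum : ∑ i : t, α * μ i = α * ∑ i, μ i := by rw [Finset.mul_sum]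
    rw [hsum] at h2
    have key : α * ∑ i, μ i < ∑ i : t, f k i.1.1 * μ i := by linarith
    have hfk : f k s' = (∑ j, μ j)⁻¹ * ∑ i : t, f k i.1.1 * μ i := by
      rw [hs', map_sum, Finset.mul_sum]
      refine Finset.sum_congr rfl fun i _ => ?_
      rw [(f k).map_smul]
      simp only [smul_eq_mul]; ring
    rw [hfk]
    calc α = (α * ∑ i, μ i) * (∑ j, μ j)⁻¹ := by
          rw [mul_assoc, mul_inv_cancel₀ hμsum.ne', mul_one]
      _ < (∑ i : t, f k i.1.1 * μ i) * (∑ j, μ j)⁻¹ :=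
          mul_lt_mul_of_pos_right key (inv_pos.2 hμsum)
      _ = (∑ j, μ j)⁻¹ * ∑ i : t, f k i.1.1 * μ i := by ring
  -- contradiction with the definition of α
  have hVc : IsCompact ((fun k => f k s') '' K) := hKc.image (hc s')
  have hVne : ((fun k => f k s') '' K).Nonempty := hKne.image _
  have hset : {v : ℝ | ∃ k ∈ K, v = f k s'} = (fun k => f k s') '' K := by
    ext w; constructor
    · rintro ⟨k, hk, rfl⟩; exact ⟨k, hk, rfl⟩
    · rintro ⟨k, hk, rfl⟩; exact ⟨k, hk, rfl⟩
  have hmem : sInf {v : ℝ | ∃ k ∈ K, v = f k s'} ∈ {w : ℝ | ∃ s ∈ S, w = sInf {v : ℝ | ∃ k ∈ K, v = f k s}} :=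
    ⟨s', hs'S, rfl⟩
  have hle : sInf {v : ℝ | ∃ k ∈ K, v = f k s'} ≤ α := le_csSup hbdd hmem
  have : sInf {v : ℝ | ∃ k ∈ K, v = f k s'} ∈ {v : ℝ | ∃ k ∈ K, v = f k s'} := by
    rw [hset]; exact (hVc.sInf_mem hVne)
  obtain ⟨k₁, hk₁, heq⟩ := this
  have := hgt k₁ hk₁
  rw [← heq] at this
  linarith


variable [Fintype d] [DecidableEq d]

lemma real_smul_matrix (r : ℝ) (M : Matrix d d ℂ) : r • M = (r : ℂ) • M := by
  ext i j; simp [Complex.real_smul]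

lemma psd_smul {r : ℝ} (hr : 0 ≤ r) {M : Matrix d d ℂ} (hM : M.PosSemidef) :
    ((r : ℂ) • M).PosSemidef := by
  rw [posSemidef_iff_dotProduct_mulVec]
  constructor
  · show ((r : ℂ) • M)ᴴ = (r : ℂ) • M
    rw [conjTranspose_smul, hM.1]
    congr 1
    simp [Complex.star_def, Complex.conj_ofReal]
  · intro x
    have := hM.dotProduct_mulVec_nonneg x
    have h2 : star x ⬝ᵥ ((r : ℂ) • M) *ᵥ x = (r : ℂ) * (star x ⬝ᵥ M *ᵥ x) := by
      rw [smul_mulVec, dotProduct_smul, smul_eq_mul]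
    rw [h2]
    exact mul_nonneg (by exact_mod_cast Complex.zero_le_real.2 hr) this

lemma psd_diag {M : Matrix d d ℂ} (hM : M.PosSemidef) (i : d) : 0 ≤ M i i := by
  exact hM.diag_nonneg


lemma psd_trace_re_nonneg {M : Matrix d d ℂ} (hM : M.PosSemidef) : 0 ≤ M.trace.re := by
  rw [Matrix.trace, Complex.re_sum]
  exact Finset.sum_nonneg fun i _ => (Complex.nonneg_iff.mp (psd_diag hM i)).1

open scoped MatrixOrder in
lemma trace_mul_re_nonneg {A B : Matrix d d ℂ} (hA : A.PosSemidef) (hB : B.PosSemidef) :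
    0 ≤ (A * B).trace.re := by
  have hs : (CFC.sqrt B).PosSemidef := (CFC.sqrt_nonneg B).posSemidef
  have h1 : A * B = A * (CFC.sqrt B * CFC.sqrt B) := by rw [CFC.sqrt_mul_sqrt_self B hB.nonneg]
  have h2 : (A * (CFC.sqrt B * CFC.sqrt B)).trace = (CFC.sqrt B * A * CFC.sqrt B).trace := by
    rw [← mul_assoc]
    rw [Matrix.trace_mul_cycle]
  have h3 : (CFC.sqrt B * A * CFC.sqrt B).PosSemidef := by
    have := hA.conjTranspose_mul_mul_same (CFC.sqrt B)
    rwa [hs.1] at this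
  rw [h1, h2]
  exact psd_trace_re_nonneg h3

lemma psd_neg_eq_zero {A : Matrix d d ℂ} (hA : A.PosSemidef) (hA' : (-A).PosSemidef) :
    A = 0 := by
  have hzero : ∀ x : d → ℂ, A *ᵥ x = 0 := by
    intro x
    rw [← (hA.dotProduct_mulVec_zero_iff x)]
    have h1 := hA.dotProduct_mulVec_nonneg x
    have h2 := hA'.dotProduct_mulVec_nonneg x
    rw [Matrix.neg_mulVec, dotProduct_neg] at h2
    exact le_antisymm (by simpa using h2) h1
  ext i j
  have := congrFun (hzero (Pi.single j 1)) i
  simpa [mulVec_single] using this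

lemma psd_entry_abs_le {M : Matrix d d ℂ} (hM : M.PosSemidef) (i j : d) :
    ‖M i j‖ ≤ ((M i i).re + (M j j).re) / 2 := by
  obtain ⟨hii, hii'⟩ := Complex.nonneg_iff.mp (psd_diag hM i)
  obtain ⟨hjj, hjj'⟩ := Complex.nonneg_iff.mp (psd_diag hM j)
  by_cases hij : i = j
  · subst hij
    have hz : M i i = ((M i i).re : ℂ) := Complex.ext rfl hii'.symm
    rw [hz, Complex.norm_of_nonneg hii]
    simp only [Complex.ofReal_re]
    linarith
  by_cases hz : M i j = 0
  · rw [hz]; simp; linarith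
  set a : ℝ := ‖M i j‖ with ha
  have hapos : 0 < a := norm_pos_iff.mpr hz
  set c : ℂ := -(M i j / (a : ℂ)) with hc
  set v : d → ℂ := Pi.single i c + Pi.single j 1 with hv
  have hkey := hM.dotProduct_mulVec_nonneg v
  have hexp : star v ⬝ᵥ M *ᵥ v =
      star c * (M i i * c) + star c * (M i j * 1) + (M j i * c) + (M j j * 1) := by
    rw [hv, star_add, ← Pi.single_star, ← Pi.single_star, star_one]
    rw [add_dotProduct, mulVec_add, dotProduct_add, dotProduct_add]
    rw [mulVec_single, mulVec_single]
    simp only [single_dotProduct, Pi.smul_apply, MulOpposite.smul_eq_mul_unop,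
      MulOpposite.unop_op, Matrix.col_apply]
    ring
  have haC : (a : ℂ) ≠ 0 := by exact_mod_cast hapos.ne'
  have hzz : star (M i j) * M i j = ((a ^ 2 : ℝ) : ℂ) := by
    rw [show star (M i j) = (starRingEnd ℂ) (M i j) from rfl,
      ← Complex.normSq_eq_conj_mul_self, ha, Complex.sq_norm]
  have hstarc : star c = -(star (M i j) / (a : ℂ)) := by
    rw [hc, star_neg, star_div₀]
    congr 2
    simp [Complex.star_def, Complex.conj_ofReal]
  have hcc : star c * c = 1 := by
    rw [hc, hstarc, neg_mul_neg, div_mul_div_comm, hzz]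
    push_cast
    rw [sq]
    exact div_self (mul_ne_zero haC haC)
  have hterm1 : star c * (M i j * 1) = -(a : ℂ) := by
    rw [mul_one, hstarc, neg_mul, div_mul_eq_mul_div, hzz]
    push_cast
    rw [sq, mul_div_assoc, div_self haC, mul_one]
  have hterm2 : M j i * c = -(a : ℂ) := by
    have hji : M j i = star (M i j) := by
      have := congrArg star (hM.1.apply i j)
      rwa [star_star] at this
    rw [hji, hc, mul_neg, ← mul_div_assoc, hzz]
    push_cast
    rw [sq, mul_div_assoc, div_self haC, mul_one]
  have hMii : star c * (M i i * c) = M i i := by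
    rw [show star c * (M i i * c) = M i i * (star c * c) by ring, hcc, mul_one]
  rw [hexp, hMii, hterm1, hterm2, mul_one] at hkey
  have := (Complex.nonneg_iff.mp hkey).1
  simp only [Complex.add_re, Complex.neg_re, Complex.ofReal_re] at this
  linarith


variable [Fintype X] [Nonempty X]

def KK (ε : ℝ) (Φ : X → Matrix d d ℂ) : Set ((X → ℝ) × (X → Matrix d d ℂ)) :=
  {q | (∀ x, 0 ≤ q.1 x) ∧ (∑ x, q.1 x) = 1 ∧
       (∀ x, (q.2 x).PosSemidef) ∧ (∀ x, (((q.1 x : ℂ)) • 1 - q.2 x).PosSemidef) ∧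
       1 - ε ≤ ∑ x, (q.2 x * Φ x).trace.re}

/-- from a feasible test to a point of `KK` -/
lemma toK {ε : ℝ} {Φ : X → Matrix d d ℂ} (hΦ : ∀ x, ((Φ x).PosSemidef ∧ (Φ x).trace = 1))
    {p : X → ℝ} {T : X → Matrix d d ℂ}
    (hp : (∀ x, 0 ≤ p x) ∧ ∑ x, p x = 1)
    (hT : ∀ x, (T x).PosSemidef ∧ (1 - T x).PosSemidef)
    (hI : ∑ x, p x * ((1 - T x) * Φ x).trace.re ≤ ε) :
    (p, fun x => ((p x : ℂ)) • T x) ∈ KK ε Φ ∧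
      ∀ Ψ : X → Matrix d d ℂ,
        ∑ x, ((((p x : ℂ)) • T x) * Ψ x).trace.re = ∑ x, p x * (T x * Ψ x).trace.re := by
  have hterm : ∀ (x : X) (Ψ : X → Matrix d d ℂ),
      ((((p x : ℂ)) • T x) * Ψ x).trace.re = p x * (T x * Ψ x).trace.re := by
    intro x Ψ
    rw [Matrix.smul_mul, Matrix.trace_smul, smul_eq_mul, Complex.re_ofReal_mul]
  have hIexp : ∀ x, p x * ((1 - T x) * Φ x).trace.re
      = p x - p x * (T x * Φ x).trace.re := by
    intro x
    rw [Matrix.sub_mul, Matrix.one_mul, Matrix.trace_sub, Complex.sub_re, (hΦ x).2]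
    simp [mul_sub]
  refine ⟨⟨hp.1, hp.2, ?_, ?_, ?_⟩, fun Ψ => Finset.sum_congr rfl fun x _ => hterm x Ψ⟩
  · exact fun x => psd_smul (hp.1 x) (hT x).1
  · intro x
    have : ((p x : ℂ)) • (1 : Matrix d d ℂ) - ((p x : ℂ)) • T x
        = ((p x : ℂ)) • (1 - T x) := by rw [smul_sub]
    rw [this]
    exact psd_smul (hp.1 x) (hT x).2
  · have h1 : ∑ x, p x * ((1 - T x) * Φ x).trace.re
        = 1 - ∑ x, p x * (T x * Φ x).trace.re := by
      rw [Finset.sum_congr rfl fun x _ => hIexp x, Finset.sum_sub_distrib, hp.2]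
    rw [Finset.sum_congr rfl fun x _ => hterm x Φ]
    linarith [hI, h1.symm.trans_le hI]

/-- from a point of `KK` to a feasible test -/
lemma ofK {ε : ℝ} {Φ : X → Matrix d d ℂ} (hΦ : ∀ x, ((Φ x).PosSemidef ∧ (Φ x).trace = 1))
    {q : (X → ℝ) × (X → Matrix d d ℂ)} (hq : q ∈ KK ε Φ) :
    ∃ (p : X → ℝ) (T : X → Matrix d d ℂ), ((∀ x, 0 ≤ p x) ∧ ∑ x, p x = 1) ∧
      (∀ x, (T x).PosSemidef ∧ (1 - T x).PosSemidef) ∧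
      (∑ x, p x * ((1 - T x) * Φ x).trace.re ≤ ε) ∧
      ∀ Ψ : X → Matrix d d ℂ,
        ∑ x, p x * (T x * Ψ x).trace.re = ∑ x, (q.2 x * Ψ x).trace.re := by
  classical
  obtain ⟨h1, h2, h3, h4, h5⟩ := hq
  set p := q.1
  set A := q.2
  have hA0 : ∀ x, p x = 0 → A x = 0 := by
    intro x hx
    refine psd_neg_eq_zero (h3 x) ?_
    have := h4 x
    rw [hx] at this
    simpa using this
  set T : X → Matrix d d ℂ := fun x =>
    if p x = 0 then 1 else (((p x)⁻¹ : ℝ) : ℂ) • A x with hT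
  have hterm : ∀ (x : X) (Ψ : X → Matrix d d ℂ),
      p x * (T x * Ψ x).trace.re = (A x * Ψ x).trace.re := by
    intro x Ψ
    by_cases hx : p x = 0
    · rw [hx, zero_mul, hA0 x hx]
      simp
    · rw [hT]
      simp only [if_neg hx]
      rw [Matrix.smul_mul, Matrix.trace_smul, smul_eq_mul, Complex.re_ofReal_mul,
        ← mul_assoc, mul_inv_cancel₀ hx, one_mul]
  have hpovm : ∀ x, (T x).PosSemidef ∧ (1 - T x).PosSemidef := by
    intro x
    by_cases hx : p x = 0
    · rw [hT]; simp only [if_pos hx]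
      exact ⟨Matrix.PosSemidef.one, by simpa using Matrix.PosSemidef.zero⟩
    · rw [hT]; simp only [if_neg hx]
      constructor
      · exact psd_smul (inv_nonneg.2 (h1 x)) (h3 x)
      · have key : (1 : Matrix d d ℂ) - (((p x)⁻¹ : ℝ) : ℂ) • A x
            = (((p x)⁻¹ : ℝ) : ℂ) • (((p x : ℂ)) • 1 - A x) := by
          rw [smul_sub, smul_smul]
          norm_cast
          rw [inv_mul_cancel₀ hx]
          simp
        rw [key]
        exact psd_smul (inv_nonneg.2 (h1 x)) (h4 x)
  have hIexp : ∀ x, p x * ((1 - T x) * Φ x).trace.re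
      = p x - (A x * Φ x).trace.re := by
    intro x
    rw [Matrix.sub_mul, Matrix.one_mul, Matrix.trace_sub, Complex.sub_re, (hΦ x).2,
      mul_sub, hterm x Φ]
    simp
  refine ⟨p, T, ⟨h1, h2⟩, hpovm, ?_, fun Ψ => Finset.sum_congr rfl fun x _ => hterm x Ψ⟩
  · rw [Finset.sum_congr rfl fun x _ => hIexp x, Finset.sum_sub_distrib, h2]
    linarith

lemma isClosed_psdSet : IsClosed {M : Matrix d d ℂ | M.PosSemidef} := by
  have hzc : IsClosed {z : ℂ | 0 ≤ z} := by
    have : {z : ℂ | 0 ≤ z} = Complex.re ⁻¹' Set.Ici 0 ∩ Complex.im ⁻¹' {0} := by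
      ext z
      simp only [Set.mem_setOf_eq, Complex.nonneg_iff, Set.mem_inter_iff, Set.mem_preimage,
        Set.mem_Ici, Set.mem_singleton_iff]
      exact and_congr Iff.rfl eq_comm
    rw [this]
    exact (isClosed_Ici.preimage Complex.continuous_re).inter
      (isClosed_singleton.preimage Complex.continuous_im)
  have h1 : {M : Matrix d d ℂ | M.PosSemidef} =
      {M : Matrix d d ℂ | Mᴴ = M} ∩ ⋂ x : d → ℂ, {M | 0 ≤ star x ⬝ᵥ M *ᵥ x} := by
    ext M
    simp only [Set.mem_setOf_eq, Set.mem_inter_iff, Set.mem_iInter]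
    exact ⟨fun h => ⟨h.1, h.dotProduct_mulVec_nonneg⟩, fun h => PosSemidef.of_dotProduct_mulVec_nonneg h.1 h.2⟩
  rw [h1]
  refine IsClosed.inter (isClosed_eq continuous_id.matrix_conjTranspose continuous_id) ?_
  refine isClosed_iInter fun x => ?_
  have hc : Continuous fun M : Matrix d d ℂ => star x ⬝ᵥ M *ᵥ x :=
    continuous_const.dotProduct (continuous_id.matrix_mulVec continuous_const)
  exact hzc.preimage hc

lemma isCompact_entryBox :
    IsCompact {M : Matrix d d ℂ | ∀ i j, ‖M i j‖ ≤ 1} := by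
  have h : IsCompact (Set.univ.pi fun _ : d => Set.univ.pi fun _ : d =>
      Metric.closedBall (0 : ℂ) 1) :=
    isCompact_univ_pi fun _ => isCompact_univ_pi fun _ => isCompact_closedBall 0 1
  have hcont : Continuous (Matrix.of : (d → d → ℂ) → Matrix d d ℂ) :=
    continuous_matrix fun i j => (continuous_apply j).comp (continuous_apply i)
  have himg := h.image hcont
  have hset : {M : Matrix d d ℂ | ∀ i j, ‖M i j‖ ≤ 1}
      = Matrix.of '' (Set.univ.pi fun _ : d => Set.univ.pi fun _ : d =>
        Metric.closedBall (0 : ℂ) 1) := by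
    ext M
    simp only [Set.mem_setOf_eq, Set.mem_image, Set.mem_univ_pi, Metric.mem_closedBall]
    constructor
    · intro hM
      refine ⟨Matrix.of.symm M, fun i j => ?_, by simp⟩
      simpa [Complex.dist_eq] using hM i j
    · rintro ⟨g, hg, rfl⟩
      intro i j
      simpa [Complex.dist_eq] using hg i j
  rw [hset]
  exact himg

lemma cont_ff (Ψ : X → Matrix d d ℂ) :
    Continuous fun q : (X → ℝ) × (X → Matrix d d ℂ) => ∑ x, ((q.2 x * Ψ x).trace).re := by
  refine continuous_finset_sum _ fun x _ => ?_
  exact Complex.continuous_re.comp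
    ((((continuous_apply x).comp continuous_snd).matrix_mul continuous_const).matrix_trace)

lemma KK_compact {ε : ℝ} (Φ : X → Matrix d d ℂ) : IsCompact (KK ε Φ) := by
  classical
  have hsub : KK ε Φ ⊆ (Set.univ.pi fun _ : X => Set.Icc (0:ℝ) 1) ×ˢ
      (Set.univ.pi fun _ : X => {M : Matrix d d ℂ | ∀ i j, ‖M i j‖ ≤ 1}) := by
    rintro ⟨p, A⟩ ⟨h1, h2, h3, h4, h5⟩
    have hple : ∀ x, p x ≤ 1 := by
      intro x
      calc p x ≤ ∑ y, p y := Finset.single_le_sum (fun y _ => h1 y) (Finset.mem_univ x)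
        _ = 1 := h2
    constructor
    · intro x _
      exact ⟨h1 x, hple x⟩
    · intro x _
      intro i j
      have hd : ∀ k, (A x k k).re ≤ p x := by
        intro k
        have := psd_diag (h4 x) k
        have hentry : (((p x : ℂ)) • (1 : Matrix d d ℂ) - A x) k k
            = ((p x : ℂ)) - A x k k := by
          simp [Matrix.sub_apply, Matrix.smul_apply, Matrix.one_apply_eq]
        rw [hentry] at this
        have := (Complex.nonneg_iff.mp this).1
        simp only [Complex.sub_re, Complex.ofReal_re] at this
        linarith
      have := psd_entry_abs_le (h3 x) i j
      have hi := hd i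
      have hj := hd j
      have hx1 := hple x
      linarith
  refine IsCompact.of_isClosed_subset ?_ ?_ hsub
  · exact ((isCompact_univ_pi fun _ => isCompact_Icc).prod
      (isCompact_univ_pi fun _ => isCompact_entryBox))
  · -- KK is closed
    have hC1 : IsClosed {q : (X → ℝ) × (X → Matrix d d ℂ) | ∀ x, 0 ≤ q.1 x} := by
      have : {q : (X → ℝ) × (X → Matrix d d ℂ) | ∀ x, 0 ≤ q.1 x}
          = ⋂ x, {q : (X → ℝ) × (X → Matrix d d ℂ) | 0 ≤ q.1 x} := by
        ext q; simp [Set.mem_iInter]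
      rw [this]
      exact isClosed_iInter fun x =>
        isClosed_le continuous_const ((continuous_apply x).comp continuous_fst)
    have hC2 : IsClosed {q : (X → ℝ) × (X → Matrix d d ℂ) | ∑ x, q.1 x = 1} :=
      isClosed_eq (continuous_finset_sum _ fun x _ => (continuous_apply x).comp continuous_fst)
        continuous_const
    have hC3 : IsClosed {q : (X → ℝ) × (X → Matrix d d ℂ) | ∀ x, (q.2 x).PosSemidef} := by
      have : {q : (X → ℝ) × (X → Matrix d d ℂ) | ∀ x, (q.2 x).PosSemidef}
          = ⋂ x, (fun q : (X → ℝ) × (X → Matrix d d ℂ) => q.2 x) ⁻¹'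
              {M : Matrix d d ℂ | M.PosSemidef} := by
        ext q; simp [Set.mem_iInter]
      rw [this]
      exact isClosed_iInter fun x =>
        isClosed_psdSet.preimage ((continuous_apply x).comp continuous_snd)
    have hC4 : IsClosed {q : (X → ℝ) × (X → Matrix d d ℂ) |
        ∀ x, (((q.1 x : ℂ)) • 1 - q.2 x).PosSemidef} := by
      have : {q : (X → ℝ) × (X → Matrix d d ℂ) | ∀ x, (((q.1 x : ℂ)) • 1 - q.2 x).PosSemidef}
          = ⋂ x, (fun q : (X → ℝ) × (X → Matrix d d ℂ) => ((q.1 x : ℂ)) • 1 - q.2 x) ⁻¹'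
              {M : Matrix d d ℂ | M.PosSemidef} := by
        ext q; simp [Set.mem_iInter]
      rw [this]
      refine isClosed_iInter fun x => isClosed_psdSet.preimage ?_
      exact ((Complex.continuous_ofReal.comp
        ((continuous_apply x).comp continuous_fst)).smul continuous_const).sub
        ((continuous_apply x).comp continuous_snd)
    have hC5 : IsClosed {q : (X → ℝ) × (X → Matrix d d ℂ) |
        1 - ε ≤ ∑ x, (q.2 x * Φ x).trace.re} :=
      isClosed_le continuous_const (cont_ff Φ)
    have hKeq : KK ε Φ = ({q : (X → ℝ) × (X → Matrix d d ℂ) | ∀ x, 0 ≤ q.1 x}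
        ∩ {q | ∑ x, q.1 x = 1} ∩ {q | ∀ x, (q.2 x).PosSemidef}
        ∩ {q | ∀ x, (((q.1 x : ℂ)) • 1 - q.2 x).PosSemidef}
        ∩ {q | 1 - ε ≤ ∑ x, (q.2 x * Φ x).trace.re}) := by
      ext q
      simp only [KK, Set.mem_setOf_eq, Set.mem_inter_iff]
      tauto
    rw [hKeq]
    exact (((hC1.inter hC2).inter hC3).inter hC4).inter hC5

lemma KK_nonempty {ε : ℝ} (hε : 0 ≤ ε) {Φ : X → Matrix d d ℂ}
    (hΦ : ∀ x, ((Φ x).PosSemidef ∧ (Φ x).trace = 1)) : (KK ε Φ).Nonempty := by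
  classical
  set c : ℝ := (Fintype.card X : ℝ)⁻¹ with hc
  have hcard : (0:ℝ) < (Fintype.card X : ℝ) := by
    exact_mod_cast Fintype.card_pos
  have hcnn : 0 ≤ c := inv_nonneg.2 hcard.le
  refine ⟨(fun _ => c, fun _ => ((c : ℂ)) • 1), fun x => hcnn, ?_, ?_, ?_, ?_⟩
  · rw [Finset.sum_const, nsmul_eq_mul, Finset.card_univ, mul_inv_cancel₀ hcard.ne']
  · exact fun x => psd_smul hcnn Matrix.PosSemidef.one
  · intro x
    simp only [sub_self]
    exact Matrix.PosSemidef.zero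
  · have : ∀ x : X, ((((c : ℂ)) • (1 : Matrix d d ℂ)) * Φ x).trace.re = c := by
      intro x
      rw [Matrix.smul_mul, Matrix.one_mul, Matrix.trace_smul, smul_eq_mul,
        Complex.re_ofReal_mul, (hΦ x).2]
      simp
    rw [Finset.sum_congr rfl fun x _ => this x, Finset.sum_const, nsmul_eq_mul,
      Finset.card_univ, mul_inv_cancel₀ hcard.ne']
    linarith

lemma KK_convex {ε : ℝ} (Φ : X → Matrix d d ℂ) : Convex ℝ (KK ε Φ) := by
  rintro ⟨p, A⟩ ⟨h1, h2, h3, h4, h5⟩ ⟨p', A'⟩ ⟨h1', h2', h3', h4', h5'⟩ a b ha hb hab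
  have hfst : ∀ x, (a • (p, A) + b • (p', A')).1 x = a * p x + b * p' x := fun x => rfl
  have hsnd : ∀ x, (a • (p, A) + b • (p', A')).2 x = a • A x + b • A' x := fun x => rfl
  refine ⟨?_, ?_, ?_, ?_, ?_⟩
  · intro x
    rw [hfst]
    exact add_nonneg (mul_nonneg ha (h1 x)) (mul_nonneg hb (h1' x))
  · simp only [hfst]
    rw [Finset.sum_add_distrib, ← Finset.mul_sum, ← Finset.mul_sum, h2, h2']
    simpa using hab
  · intro x
    rw [hsnd, real_smul_matrix, real_smul_matrix]
    exact (psd_smul ha (h3 x)).add (psd_smul hb (h3' x))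
  · intro x
    rw [hfst, hsnd]
    have key : (((a * p x + b * p' x : ℝ) : ℂ)) • (1 : Matrix d d ℂ) - (a • A x + b • A' x)
        = (a : ℂ) • (((p x : ℂ)) • 1 - A x) + (b : ℂ) • (((p' x : ℂ)) • 1 - A' x) := by
      rw [real_smul_matrix a (A x), real_smul_matrix b (A' x)]
      push_cast
      module
    rw [key]
    exact (psd_smul ha (h4 x)).add (psd_smul hb (h4' x))
  · simp only [hsnd]
    have expand : ∀ x : X, (((a • A x + b • A' x) * Φ x).trace).re
        = a * ((A x * Φ x).trace).re + b * ((A' x * Φ x).trace).re := by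
      intro x
      rw [Matrix.add_mul, Matrix.trace_add, Complex.add_re, real_smul_matrix a (A x),
        real_smul_matrix b (A' x), Matrix.smul_mul, Matrix.smul_mul, Matrix.trace_smul,
        Matrix.trace_smul, smul_eq_mul, smul_eq_mul, Complex.re_ofReal_mul,
        Complex.re_ofReal_mul]
    rw [Finset.sum_congr rfl fun x _ => expand x, Finset.sum_add_distrib,
      ← Finset.mul_sum, ← Finset.mul_sum]
    have h5a : 1 - ε ≤ ∑ x : X, (A x * Φ x).trace.re := h5
    have h5b : 1 - ε ≤ ∑ x : X, (A' x * Φ x).trace.re := h5'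
    have ha5 := mul_le_mul_of_nonneg_left h5a ha
    have hb5 := mul_le_mul_of_nonneg_left h5b hb
    have hsum : a * (1 - ε) + b * (1 - ε) = 1 - ε := by rw [← add_mul, hab, one_mul]
    linarith


/-- The bilinear pairing used in the minimax argument. -/
noncomputable def ff : ((X → ℝ) × (X → Matrix d d ℂ)) →ₗ[ℝ] (X → Matrix d d ℂ) →ₗ[ℝ] ℝ :=
  LinearMap.mk₂ ℝ (fun q Ψ => ∑ x, ((q.2 x * Ψ x).trace).re)
    (fun q q' Ψ => by
      simp only [Prod.snd_add, Pi.add_apply, add_mul, Matrix.trace_add, Complex.add_re]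
      rw [Finset.sum_add_distrib])
    (fun c q Ψ => by
      simp only [Prod.smul_snd, Pi.smul_apply, Matrix.smul_mul, Matrix.trace_smul,
        smul_eq_mul, Complex.real_smul, Complex.re_ofReal_mul]
      rw [Finset.mul_sum])
    (fun q Ψ Ψ' => by
      simp only [Pi.add_apply, mul_add, Matrix.trace_add, Complex.add_re]
      rw [Finset.sum_add_distrib])
    (fun c q Ψ => by
      simp only [Pi.smul_apply, Matrix.mul_smul, Matrix.trace_smul,
        smul_eq_mul, Complex.real_smul, Complex.re_ofReal_mul]
      rw [Finset.mul_sum])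

lemma cont_ff' (Ψ : X → Matrix d d ℂ) :
    Continuous fun q : (X → ℝ) × (X → Matrix d d ℂ) => ff q Ψ := cont_ff Ψ

end AuxMinimax

/-- **Minimax characterization of type II errors for CQ channels** (Proposition 3.2): for
`ε ≥ 0`, a (nonempty) compact convex set `𝓕` of free CQ channels, and a CQ channel `Φ`,
`β_ε(Φ‖𝓕) = max_{Φ_free ∈ 𝓕} β_ε(Φ‖Φ_free)`. -/
theorem minimax_characterization_of_typeII_errors
    {X d : Type*} [Fintype X] [Nonempty X] [Fintype d] [DecidableEq d]
    (ε : ℝ) (hε : 0 ≤ ε)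
    (S : Set (X → Matrix d d ℂ)) (hS : ∀ Φf ∈ S, IsCQChannel Φf)
    (hne : S.Nonempty) (hcomp : IsCompact S) (hconv : Convex ℝ S)
    (Φ : X → Matrix d d ℂ) (hΦ : IsCQChannel Φ) :
    typeIIErrSet ε Φ S = sSup { w : ℝ | ∃ Φf ∈ S, w = typeIIErr ε Φ Φf } := by
  classical
  obtain ⟨Φf₀, hΦf₀⟩ := hne
  -- the uniform test accepting everything
  have hcard : (0:ℝ) < (Fintype.card X : ℝ) := by exact_mod_cast Fintype.card_pos
  set p₀ : X → ℝ := fun _ => (Fintype.card X : ℝ)⁻¹ with hp₀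
  have hp₀prob : IsProbDist p₀ :=
    ⟨fun _ => inv_nonneg.2 hcard.le, by
      rw [Finset.sum_const, nsmul_eq_mul, Finset.card_univ, mul_inv_cancel₀ hcard.ne']⟩
  set T₀ : X → Matrix d d ℂ := fun _ => 1 with hT₀
  have hT₀povm : ∀ x, IsPOVMElem (T₀ x) := fun x =>
    ⟨Matrix.PosSemidef.one, by simpa [hT₀] using (Matrix.PosSemidef.zero : (0 : Matrix d d ℂ).PosSemidef)⟩
  have hT₀err : typeIErrVal Φ p₀ T₀ ≤ ε := by
    have h0 : typeIErrVal Φ p₀ T₀ = 0 := by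
      unfold typeIErrVal
      simp [hT₀]
    rw [h0]; exact hε
  have hval₀ : ∀ Ψ : X → Matrix d d ℂ, IsCQChannel Ψ →
      ∑ x, p₀ x * (T₀ x * Ψ x).trace.re = 1 := by
    intro Ψ hΨ
    have hterm : ∀ x : X, p₀ x * (T₀ x * Ψ x).trace.re = (Fintype.card X : ℝ)⁻¹ := by
      intro x
      rw [hT₀, hp₀]
      simp only [Matrix.one_mul]
      rw [(hΨ x).2]
      simp
    rw [Finset.sum_congr rfl fun x _ => hterm x, Finset.sum_const, nsmul_eq_mul,
      Finset.card_univ, mul_inv_cancel₀ hcard.ne']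
  -- nonnegativity of values
  have hvalnn : ∀ (p : X → ℝ) (T Ψ : X → Matrix d d ℂ), IsProbDist p →
      (∀ x, IsPOVMElem (T x)) → IsCQChannel Ψ →
      0 ≤ ∑ x, p x * (T x * Ψ x).trace.re := by
    intro p T Ψ hp hT hΨ
    exact Finset.sum_nonneg fun x _ =>
      mul_nonneg (hp.1 x) (trace_mul_re_nonneg (hT x).1 (hΨ x).1)
  -- the inner sup sets
  set W : (X → ℝ) → (X → Matrix d d ℂ) → Set ℝ :=
    fun p T => {w : ℝ | ∃ Φf ∈ S, w = ∑ x, p x * (T x * Φf x).trace.re} with hWdef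
  have hWbdd : ∀ (p : X → ℝ) (T : X → Matrix d d ℂ), BddAbove (W p T) := by
    intro p T
    have hcont : Continuous fun Φf : X → Matrix d d ℂ =>
        ∑ x, p x * (T x * Φf x).trace.re := by
      refine continuous_finset_sum _ fun x _ => Continuous.mul continuous_const ?_
      exact Complex.continuous_re.comp
        ((continuous_const.matrix_mul (continuous_apply x)).matrix_trace)
    have hseteq : W p T
        = (fun Φf : X → Matrix d d ℂ => ∑ x, p x * (T x * Φf x).trace.re) '' S := by
      ext w
      constructor
      · rintro ⟨Φf, hΦf, rfl⟩; exact ⟨Φf, hΦf, rfl⟩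
      · rintro ⟨Φf, hΦf, rfl⟩; exact ⟨Φf, hΦf, rfl⟩
    rw [hseteq]
    exact (hcomp.image hcont).bddAbove
  have hWne : ∀ (p : X → ℝ) (T : X → Matrix d d ℂ), (W p T).Nonempty :=
    fun p T => ⟨_, Φf₀, hΦf₀, rfl⟩
  -- the value sets of the pairwise problems
  set V : (X → Matrix d d ℂ) → Set ℝ :=
    fun Ψ => {v : ℝ | ∃ p T, IsProbDist p ∧ (∀ x, IsPOVMElem (T x)) ∧
      typeIErrVal Φ p T ≤ ε ∧ v = ∑ x, p x * (T x * Ψ x).trace.re} with hVdef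
  have hgoalV : ∀ Ψ : X → Matrix d d ℂ, typeIIErr ε Φ Ψ = sInf (V Ψ) := fun _ => rfl
  have hVbdd : ∀ Φf ∈ S, BddBelow (V Φf) := by
    intro Φf hΦf
    refine ⟨0, ?_⟩
    rintro v ⟨p, T, hp, hT, _, rfl⟩
    exact hvalnn p T Φf hp hT (hS Φf hΦf)
  have hVmem1 : ∀ Φf ∈ S, (1:ℝ) ∈ V Φf := fun Φf hΦf =>
    ⟨p₀, T₀, hp₀prob, hT₀povm, hT₀err, (hval₀ Φf (hS Φf hΦf)).symm⟩
  -- R and L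
  set R : Set ℝ := {w : ℝ | ∃ Φf ∈ S, w = typeIIErr ε Φ Φf} with hRdef
  have hRne : R.Nonempty := ⟨_, Φf₀, hΦf₀, rfl⟩
  have hRbddAbove : BddAbove R := by
    refine ⟨1, ?_⟩
    rintro w ⟨Φf, hΦf, rfl⟩
    rw [hgoalV]
    exact csInf_le (hVbdd Φf hΦf) (hVmem1 Φf hΦf)
  set L : Set ℝ := {v : ℝ | ∃ p T, IsProbDist p ∧ (∀ x, IsPOVMElem (T x)) ∧
      typeIErrVal Φ p T ≤ ε ∧ v = sSup (W p T)} with hLdef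
  have hgoalL : typeIIErrSet ε Φ S = sInf L := rfl
  have hLne : L.Nonempty := ⟨_, p₀, T₀, hp₀prob, hT₀povm, hT₀err, rfl⟩
  have hLbdd : BddBelow L := by
    refine ⟨0, ?_⟩
    rintro v ⟨p, T, hp, hT, hI, rfl⟩
    calc (0:ℝ) ≤ ∑ x, p x * (T x * Φf₀ x).trace.re :=
          hvalnn p T Φf₀ hp hT (hS Φf₀ hΦf₀)
      _ ≤ sSup (W p T) := le_csSup (hWbdd p T) ⟨Φf₀, hΦf₀, rfl⟩
  -- step A : sSup R ≤ sInf L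
  have hstepA : sSup R ≤ sInf L := by
    refine le_csInf hLne ?_
    rintro v ⟨p, T, hp, hT, hI, rfl⟩
    refine csSup_le hRne ?_
    rintro w ⟨Φf, hΦf, rfl⟩
    have h1 : typeIIErr ε Φ Φf ≤ ∑ x, p x * (T x * Φf x).trace.re := by
      rw [hgoalV]
      exact csInf_le (hVbdd Φf hΦf) ⟨p, T, hp, hT, hI, rfl⟩
    exact h1.trans (le_csSup (hWbdd p T) ⟨Φf, hΦf, rfl⟩)
  -- step B : sInf L ≤ sSup R via the minimax theorem
  have hKKeqV : ∀ Ψ : X → Matrix d d ℂ,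
      {v : ℝ | ∃ k ∈ KK ε Φ, v = ff k Ψ} = V Ψ := by
    intro Ψ
    ext v
    constructor
    · rintro ⟨k, hk, rfl⟩
      obtain ⟨p, T, hp, hT, hI, hEq⟩ := ofK hΦ hk
      exact ⟨p, T, hp, hT, hI, (hEq Ψ).symm⟩
    · rintro ⟨p, T, hp, hT, hI, rfl⟩
      obtain ⟨hmem, hEq⟩ := toK hΦ hp hT hI
      exact ⟨(p, fun x => ((p x : ℂ)) • T x), hmem, (hEq Ψ).symm⟩
  set αs : Set ℝ :=
    {w : ℝ | ∃ s ∈ S, w = sInf {v : ℝ | ∃ k ∈ KK ε Φ, v = ff k s}} with hαsdef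
  have hαR : αs = R := by
    ext w
    simp only [hαsdef, hRdef, Set.mem_setOf_eq]
    constructor
    · rintro ⟨s, hs, rfl⟩
      exact ⟨s, hs, by rw [hKKeqV s, hgoalV s]⟩
    · rintro ⟨s, hs, rfl⟩
      exact ⟨s, hs, by rw [hKKeqV s, hgoalV s]⟩
  have hbddαs : BddAbove αs := by rw [hαR]; exact hRbddAbove
  obtain ⟨k, hkK, hk⟩ := minimax_exists ff cont_ff' (KK ε Φ) (KK_compact Φ)
    (KK_nonempty hε hΦ) (KK_convex Φ) S ⟨Φf₀, hΦf₀⟩ hconv hbddαs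
  obtain ⟨p, T, hp, hT, hI, hEq⟩ := ofK hΦ hkK
  have hstepB : sInf L ≤ sSup R := by
    have h1 : sInf L ≤ sSup (W p T) := csInf_le hLbdd ⟨p, T, hp, hT, hI, rfl⟩
    have h2 : sSup (W p T) ≤ sSup R := by
      rw [← hαR]
      refine csSup_le (hWne p T) ?_
      rintro w ⟨Φf, hΦf, rfl⟩
      exact (hEq Φf).trans_le (hk Φf hΦf)
    exact h1.trans h2
  rw [hgoalL]
  exact le_antisymm hstepB hstepA

end CQ
end
end

section
/- Monotonicity of type II errors for CQ channels under superchannels: For any parameter ε ≥ 0, any CQ channels Φ1, Φ2 : X_in × X_aux → D(H_in ⊗ H_aux), and any superchannel Θ converting CQ channels from X_in → D(H_in) into CQ channels from X_out → D(H_out), it holds that β_ε((Θ⊗id)[Φ1] ‖ (Θ⊗id)[Φ2]) ≥ β_ε(Φ1‖Φ2). -/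
open scoped Kronecker
open Filter Matrix
open scoped ComplexOrder

attribute [local instance] Classical.propDecidable

noncomputable section

namespace CQ

variable {X d : Type*}

/-! ### Auxiliary lemmas for the proof of Lemma 3.3 -/

section Aux

variable {dI dO : Type*} [Fintype dI] [DecidableEq dI] [Fintype dO] [DecidableEq dO]

set_option linter.unusedSectionVars false

lemma trace_mul_expand (A B : Matrix dI dI ℂ) :
    (A * B).trace = ∑ i, ∑ j, A i j * B j i := by
  simp [Matrix.trace, Matrix.mul_apply, Matrix.diag]

lemma psd_trace_mul_nonneg {A B : Matrix dO dO ℂ} (hA : A.PosSemidef) (hB : B.PosSemidef) :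
    0 ≤ (A * B).trace := by
  obtain ⟨C, hC⟩ : ∃ C : Matrix dO dO ℂ, A = Cᴴ * C := by
    open MatrixOrder in
    obtain ⟨X, hX, -, rfl⟩ :=
      CFC.exists_sqrt_of_isSelfAdjoint_of_quasispectrumRestricts hA.isHermitian
        (QuasispectrumRestricts.nnreal_of_nonneg hA.nonneg)
    exact ⟨X, by rw [← Matrix.star_eq_conjTranspose, hX.star_eq]⟩
  rw [hC, mul_assoc, Matrix.trace_mul_comm]
  refine Finset.sum_nonneg fun i _ => ?_
  have := (hB.mul_mul_conjTranspose_same C).dotProduct_mulVec_nonneg (Pi.single i 1)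
  simpa [Matrix.mulVec_single, dotProduct, Pi.single_apply, Finset.sum_ite_eq'] using this

lemma psd_trace_mul_re_nonneg {A B : Matrix dO dO ℂ} (hA : A.PosSemidef) (hB : B.PosSemidef) :
    0 ≤ ((A * B).trace).re :=
  (Complex.le_def.mp (psd_trace_mul_nonneg hA hB)).1

lemma isHermitian_exists_psd_sub {H : Matrix dO dO ℂ} (hH : H.IsHermitian) :
    ∃ P Q : Matrix dO dO ℂ, P.PosSemidef ∧ Q.PosSemidef ∧ H = P - Q := by
  set U : Matrix dO dO ℂ := (hH.eigenvectorUnitary : Matrix dO dO ℂ) with hU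
  refine ⟨U * Matrix.diagonal (fun i => ((max (hH.eigenvalues i) 0 : ℝ) : ℂ)) * star U,
    U * Matrix.diagonal (fun i => ((max (-hH.eigenvalues i) 0 : ℝ) : ℂ)) * star U, ?_, ?_, ?_⟩
  · have := (Matrix.posSemidef_diagonal_iff.mpr
      (fun i => by positivity :
        ∀ i, (0:ℂ) ≤ ((max (hH.eigenvalues i) 0 : ℝ) : ℂ))).mul_mul_conjTranspose_same U
    simpa [Matrix.star_eq_conjTranspose] using this
  · have := (Matrix.posSemidef_diagonal_iff.mpr
      (fun i => by positivity :
        ∀ i, (0:ℂ) ≤ ((max (-hH.eigenvalues i) 0 : ℝ) : ℂ))).mul_mul_conjTranspose_same U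
    simpa [Matrix.star_eq_conjTranspose] using this
  · have hspec := hH.spectral_theorem
    rw [← Matrix.sub_mul, ← Matrix.mul_sub]
    have hdiag : (Matrix.diagonal (fun i => ((max (hH.eigenvalues i) 0 : ℝ) : ℂ))
        - Matrix.diagonal (fun i => ((max (-hH.eigenvalues i) 0 : ℝ) : ℂ)))
        = Matrix.diagonal (RCLike.ofReal ∘ hH.eigenvalues) := by
      ext i j
      by_cases h : i = j
      · subst h
        simp only [Matrix.sub_apply, Matrix.diagonal_apply_eq, Function.comp]
        rw [← Complex.ofReal_sub]
        norm_cast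
        rcases le_total (hH.eigenvalues i) 0 with h | h
        · simp [max_eq_right h, max_eq_left (neg_nonneg.mpr h)]
        · simp [max_eq_left h, max_eq_right (neg_nonpos.mpr h)]
      · simp [Matrix.diagonal_apply_ne _ h]
    rw [hdiag]
    rw [Unitary.conjStarAlgAut_apply] at hspec
    exact hspec

/-- The (trace-duality) adjoint of a linear map on matrices. -/
def adjMap (L : Matrix dI dI ℂ →ₗ[ℂ] Matrix dO dO ℂ) (T : Matrix dO dO ℂ) : Matrix dI dI ℂ :=
  Matrix.of fun i j => (T * L (Matrix.single j i 1)).trace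

lemma adjMap_trace (L : Matrix dI dI ℂ →ₗ[ℂ] Matrix dO dO ℂ) (T : Matrix dO dO ℂ)
    (M : Matrix dI dI ℂ) : ((adjMap L T) * M).trace = (T * L M).trace := by
  conv_rhs => rw [Matrix.matrix_eq_sum_single M]
  rw [trace_mul_expand]
  have : ∀ i j, Matrix.single i j (M i j) = M i j • Matrix.single i j (1:ℂ) := by
    intro i j; rw [Matrix.smul_single, smul_eq_mul, mul_one]
  simp_rw [this, map_sum, _root_.map_smul, Finset.mul_sum, Matrix.mul_smul, Matrix.trace_sum,
    Matrix.trace_smul, smul_eq_mul, adjMap, Matrix.of_apply]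
  rw [Finset.sum_comm]
  congr 1; ext j; congr 1; ext i
  ring

lemma adjMap_sub (L : Matrix dI dI ℂ →ₗ[ℂ] Matrix dO dO ℂ) (T S : Matrix dO dO ℂ) :
    adjMap L (T - S) = adjMap L T - adjMap L S := by
  ext i j
  simp [adjMap, Matrix.sub_mul, Matrix.trace_sub]

lemma trace_stdBasisMatrix (i j : dI) :
    (Matrix.single i j (1:ℂ)).trace = if i = j then 1 else 0 := by
  by_cases h : i = j
  · subst h
    simp [Matrix.trace, Matrix.diag, Matrix.single, Finset.sum_ite_eq]
  · simp only [Matrix.trace, Matrix.diag, Matrix.single, Matrix.of_apply]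
    rw [if_neg h, Finset.sum_eq_zero]
    intro k _
    rw [if_neg]
    rintro ⟨rfl, rfl⟩; exact h rfl

lemma adjMap_one (L : Matrix dI dI ℂ →ₗ[ℂ] Matrix dO dO ℂ)
    (hL : ∀ M, (L M).trace = M.trace) :
    adjMap L (1 : Matrix dO dO ℂ) = 1 := by
  ext i j
  simp only [adjMap, Matrix.of_apply, Matrix.one_mul, hL, trace_stdBasisMatrix,
    Matrix.one_apply]
  simp [eq_comm]

lemma conjTranspose_stdBasisMatrix (i j : dI) :
    (Matrix.single i j (1:ℂ))ᴴ = Matrix.single j i 1 := by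
  ext a b
  simp [Matrix.single, Matrix.conjTranspose_apply, and_comm]

lemma map_conjTranspose (L : Matrix dI dI ℂ →ₗ[ℂ] Matrix dO dO ℂ)
    (hL : ∀ M, M.PosSemidef → (L M).PosSemidef) (M : Matrix dI dI ℂ) :
    L Mᴴ = (L M)ᴴ := by
  have herm : ∀ H : Matrix dI dI ℂ, H.IsHermitian → (L H).IsHermitian := by
    intro H hH
    obtain ⟨P, Q, hP, hQ, rfl⟩ := isHermitian_exists_psd_sub hH
    rw [map_sub]
    exact ((hL P hP).1).sub ((hL Q hQ).1)
  have hH1 : ((1/2 : ℂ) • (M + Mᴴ)).IsHermitian := by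
    unfold Matrix.IsHermitian
    rw [Matrix.conjTranspose_smul, Matrix.conjTranspose_add,
      Matrix.conjTranspose_conjTranspose, show star (1/2 : ℂ) = 1/2 by norm_num, add_comm]
  have hH2 : ((-(Complex.I/2)) • (M - Mᴴ)).IsHermitian := by
    unfold Matrix.IsHermitian
    rw [Matrix.conjTranspose_smul, Matrix.conjTranspose_sub,
      Matrix.conjTranspose_conjTranspose,
      show star (-(Complex.I/2)) = Complex.I/2 by
        simp [Complex.ext_iff]; norm_num,
      show Mᴴ - M = -(M - Mᴴ) by abel, smul_neg, ← neg_smul]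
  have e1 : M = (1/2 : ℂ) • (M + Mᴴ) + Complex.I • ((-(Complex.I/2)) • (M - Mᴴ)) := by
    rw [smul_smul,
      show Complex.I * -(Complex.I/2) = 1/2 by
        rw [mul_neg, ← mul_div_assoc, Complex.I_mul_I]; norm_num,
      ← smul_add, show M + Mᴴ + (M - Mᴴ) = (2:ℂ) • M by rw [two_smul]; abel,
      smul_smul]
    norm_num
  have e2 : Mᴴ = (1/2 : ℂ) • (M + Mᴴ) - Complex.I • ((-(Complex.I/2)) • (M - Mᴴ)) := by
    rw [smul_smul,
      show Complex.I * -(Complex.I/2) = 1/2 by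
        rw [mul_neg, ← mul_div_assoc, Complex.I_mul_I]; norm_num,
      ← smul_sub, show M + Mᴴ - (M - Mᴴ) = (2:ℂ) • Mᴴ by rw [two_smul]; abel,
      smul_smul]
    norm_num
  have h3 : L Mᴴ = L ((1/2 : ℂ) • (M + Mᴴ)) - Complex.I • L ((-(Complex.I/2)) • (M - Mᴴ)) := by
    conv_lhs => rw [e2]
    rw [map_sub]
    congr 1
    exact _root_.map_smul L Complex.I _
  have h4 : L M = L ((1/2 : ℂ) • (M + Mᴴ)) + Complex.I • L ((-(Complex.I/2)) • (M - Mᴴ)) := by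
    conv_lhs => rw [e1]
    rw [map_add]
    congr 1
    exact _root_.map_smul L Complex.I _
  rw [h3, h4, Matrix.conjTranspose_add, Matrix.conjTranspose_smul, (herm _ hH1).eq,
    (herm _ hH2).eq, show star Complex.I = -Complex.I by simp]
  module

lemma vecMulVec_star_posSemidef (v : dI → ℂ) :
    (Matrix.vecMulVec v (star v)).PosSemidef := by
  rw [Matrix.posSemidef_iff_dotProduct_mulVec]
  constructor
  · unfold Matrix.IsHermitian
    ext i j
    simp [Matrix.vecMulVec, Matrix.conjTranspose_apply, mul_comm]
  · intro x
    have : star x ⬝ᵥ (Matrix.vecMulVec v (star v)) *ᵥ x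
        = (star x ⬝ᵥ v) * star (star x ⬝ᵥ v) := by
      simp only [dotProduct, Matrix.mulVec, Matrix.vecMulVec_apply, Pi.star_apply,
        star_sum, star_mul', star_star]
      rw [Finset.sum_mul]
      congr 1; ext i
      rw [Finset.mul_sum, Finset.mul_sum]
      congr 1; ext j
      ring
    rw [this]
    exact mul_star_self_nonneg _

lemma trace_mul_vecMulVec (A : Matrix dI dI ℂ) (v : dI → ℂ) :
    (A * Matrix.vecMulVec v (star v)).trace = star v ⬝ᵥ A *ᵥ v := by
  rw [trace_mul_expand]
  simp only [Matrix.vecMulVec_apply, Pi.star_apply, dotProduct, Matrix.mulVec]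
  congr 1; ext i
  rw [Finset.mul_sum]
  congr 1; ext j
  simp [dotProduct]
  ring

lemma adjMap_posSemidef (L : Matrix dI dI ℂ →ₗ[ℂ] Matrix dO dO ℂ)
    (hL : ∀ M, M.PosSemidef → (L M).PosSemidef) {T : Matrix dO dO ℂ}
    (hT : T.PosSemidef) : (adjMap L T).PosSemidef := by
  rw [Matrix.posSemidef_iff_dotProduct_mulVec]
  constructor
  · unfold Matrix.IsHermitian
    ext i j
    simp only [Matrix.conjTranspose_apply, adjMap, Matrix.of_apply]
    rw [← Matrix.trace_conjTranspose, Matrix.conjTranspose_mul,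
      ← map_conjTranspose L hL, conjTranspose_stdBasisMatrix, hT.1.eq,
      Matrix.trace_mul_comm]
  · intro x
    rw [← trace_mul_vecMulVec, adjMap_trace]
    exact psd_trace_mul_nonneg hT (hL _ (vecMulVec_star_posSemidef x))

lemma psd_smul_real {c : ℝ} (hc : 0 ≤ c) {A : Matrix dO dO ℂ} (hA : A.PosSemidef) :
    (((c : ℂ)) • A).PosSemidef := by
  rw [Matrix.posSemidef_iff_dotProduct_mulVec]
  constructor
  · unfold Matrix.IsHermitian
    rw [Matrix.conjTranspose_smul, hA.1.eq]
    congr 1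
    simp [Complex.ext_iff]
  · intro x
    rw [Matrix.smul_mulVec, dotProduct_smul, smul_eq_mul]
    exact mul_nonneg (by exact_mod_cast hc) (hA.dotProduct_mulVec_nonneg x)

lemma psd_sum {ι : Type*} (s : Finset ι) (f : ι → Matrix dO dO ℂ)
    (h : ∀ i ∈ s, (f i).PosSemidef) : (∑ i ∈ s, f i).PosSemidef := by
  classical
  induction s using Finset.induction with
  | empty => simpa using (Matrix.PosSemidef.zero (n := dO) (R := ℂ))
  | insert _ _ hni ih =>
    rw [Finset.sum_insert hni]
    exact (h _ (Finset.mem_insert_self _ _)).add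
      (ih fun i hi => h i (Finset.mem_insert_of_mem hi))

lemma typeI_split {Y dh : Type*} [Fintype Y] [Fintype dh] [DecidableEq dh]
    (Φ : Y → Matrix dh dh ℂ) (htr : ∀ y, (Φ y).trace = 1) (r : Y → ℝ)
    (S : Y → Matrix dh dh ℂ) :
    typeIErrVal Φ r S = ∑ y, r y - ∑ y, r y * (S y * Φ y).trace.re := by
  rw [typeIErrVal, ← Finset.sum_sub_distrib]
  refine Finset.sum_congr rfl fun y _ => ?_
  rw [Matrix.sub_mul, Matrix.one_mul, Matrix.trace_sub, Complex.sub_re, htr y]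
  simp only [Complex.one_re]
  ring

end Aux

section TensorId

variable {din dout daux : Type*} [Fintype din] [DecidableEq din] [Fintype dout]
  [DecidableEq dout] [Fintype daux] [DecidableEq daux]

/-- `tensorIdMap N k` as a linear map. -/
def tensorIdLin (N : Matrix din din ℂ →ₗ[ℂ] Matrix dout dout ℂ) (k : Type*) :
    Matrix (din × k) (din × k) ℂ →ₗ[ℂ] Matrix (dout × k) (dout × k) ℂ where
  toFun := tensorIdMap N k
  map_add' M₁ M₂ := by
    ext a b
    show N (Matrix.of fun i j => (M₁ + M₂) (i, a.2) (j, b.2)) a.1 b.1 = _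
    have harg : (Matrix.of fun i j => (M₁ + M₂) (i, a.2) (j, b.2) : Matrix din din ℂ)
        = (Matrix.of fun i j => M₁ (i, a.2) (j, b.2))
          + (Matrix.of fun i j => M₂ (i, a.2) (j, b.2)) := by
      ext i j; simp
    rw [harg, map_add]
    rfl
  map_smul' c M := by
    ext a b
    show N (Matrix.of fun i j => (c • M) (i, a.2) (j, b.2)) a.1 b.1 = _
    have harg : (Matrix.of fun i j => (c • M) (i, a.2) (j, b.2) : Matrix din din ℂ)
        = c • Matrix.of fun i j => M (i, a.2) (j, b.2) := by
      ext i j; simp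
    rw [harg, _root_.map_smul]
    rfl

@[simp] lemma tensorIdLin_apply (N : Matrix din din ℂ →ₗ[ℂ] Matrix dout dout ℂ)
    (k : Type*) (M : Matrix (din × k) (din × k) ℂ) :
    tensorIdLin N k M = tensorIdMap N k M := rfl

set_option linter.unusedSectionVars false in
lemma tensorIdMap_posSemidef (N : Matrix din din ℂ →ₗ[ℂ] Matrix dout dout ℂ)
    (hN : IsCPTP N) {M : Matrix (din × daux) (din × daux) ℂ} (hM : M.PosSemidef) :
    (tensorIdMap N daux M).PosSemidef := by
  classical
  let e : daux ≃ Fin (Fintype.card daux) := Fintype.equivFin daux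
  let f : din × daux ≃ din × Fin (Fintype.card daux) := Equiv.prodCongr (Equiv.refl din) e
  let g : dout × daux ≃ dout × Fin (Fintype.card daux) := Equiv.prodCongr (Equiv.refl dout) e
  have key : tensorIdMap N daux M
      = (tensorIdMap N (Fin (Fintype.card daux))
          (M.submatrix ⇑f.symm ⇑f.symm)).submatrix ⇑g ⇑g := by
    ext a b
    show N (Matrix.of fun i j => M (i, a.2) (j, b.2)) a.1 b.1
        = N (Matrix.of fun i j =>
            (M.submatrix ⇑f.symm ⇑f.symm) (i, (g a).2) (j, (g b).2)) a.1 b.1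
    have harg : (Matrix.of fun i j =>
          (M.submatrix ⇑f.symm ⇑f.symm) (i, (g a).2) (j, (g b).2) : Matrix din din ℂ)
        = Matrix.of fun i j => M (i, a.2) (j, b.2) := by
      ext i j
      simp [f, g, e]
    rw [harg]
  rw [key]
  exact (hN.1 (Fin (Fintype.card daux)) _ (hM.submatrix ⇑f.symm)).submatrix ⇑g

set_option linter.unusedSectionVars false in
lemma tensorIdMap_trace (N : Matrix din din ℂ →ₗ[ℂ] Matrix dout dout ℂ)
    (hTP : ∀ M, (N M).trace = M.trace) (M : Matrix (din × daux) (din × daux) ℂ) :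
    (tensorIdMap N daux M).trace = M.trace := by
  calc (tensorIdMap N daux M).trace
      = ∑ a1 : dout, ∑ a2 : daux, N (Matrix.of fun i j => M (i, a2) (j, a2)) a1 a1 := by
        rw [Matrix.trace, Fintype.sum_prod_type]; rfl
    _ = ∑ a2 : daux, ∑ a1 : dout, N (Matrix.of fun i j => M (i, a2) (j, a2)) a1 a1 :=
        Finset.sum_comm
    _ = ∑ a2 : daux, (N (Matrix.of fun i j => M (i, a2) (j, a2))).trace := rfl
    _ = ∑ a2 : daux, (Matrix.of (fun i j => M (i, a2) (j, a2)) : Matrix din din ℂ).trace := by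
        simp_rw [hTP]
    _ = ∑ a2 : daux, ∑ i : din, M (i, a2) (i, a2) := rfl
    _ = ∑ i : din, ∑ a2 : daux, M (i, a2) (i, a2) := Finset.sum_comm
    _ = M.trace := by rw [Matrix.trace, Fintype.sum_prod_type]; rfl

end TensorId


/-- **Monotonicity of type II errors for CQ channels under superchannels** (Lemma 3.3): for
`ε ≥ 0`, CQ channels `Φ₁, Φ₂ : X_in × X_aux → D(H_in ⊗ H_aux)`, and any superchannel `Θ`
(given by a conditional probability `p_Θ(x_in|x_out)` and CPTP maps `N_{x_in,x_out}`),
`β_ε((Θ⊗id)[Φ₁]‖(Θ⊗id)[Φ₂]) ≥ β_ε(Φ₁‖Φ₂)`. -/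
theorem monotonicity_of_typeII_errors_under_superchannels
    {Xin Xout Xaux din dout daux : Type*}
    [Fintype Xin] [Nonempty Xin] [Fintype Xout] [Nonempty Xout]
    [Fintype Xaux] [Nonempty Xaux]
    [Fintype din] [DecidableEq din] [Fintype dout] [DecidableEq dout]
    [Fintype daux] [DecidableEq daux]
    (ε : ℝ) (hε : 0 ≤ ε)
    (Φ₁ Φ₂ : Xin × Xaux → Matrix (din × daux) (din × daux) ℂ)
    (hΦ₁ : IsCQChannel Φ₁) (hΦ₂ : IsCQChannel Φ₂)
    (p : Xout → Xin → ℝ) (hp : ∀ xo, IsProbDist (p xo))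
    (N : Xin → Xout → Matrix din din ℂ →ₗ[ℂ] Matrix dout dout ℂ)
    (hN : ∀ xi xo, IsCPTP (N xi xo)) :
    typeIIErr ε Φ₁ Φ₂ ≤ typeIIErr ε (superAct p N Φ₁) (superAct p N Φ₂) := by
  classical
  rw [typeIIErr, typeIIErr]
  apply csInf_le_csInf
  · refine ⟨0, ?_⟩
    rintro v ⟨r, S, hr, hS, -, rfl⟩
    exact Finset.sum_nonneg fun x _ =>
      mul_nonneg (hr.1 x) (psd_trace_mul_re_nonneg (hS x).1 (hΦ₂ x).1)
  · refine ⟨_, (fun _ => (Fintype.card (Xout × Xaux) : ℝ)⁻¹), (fun _ => 1),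
      ⟨fun _ => by positivity, ?_⟩,
      fun _ => ⟨Matrix.PosSemidef.one, by rw [sub_self]; exact Matrix.PosSemidef.zero⟩, ?_, rfl⟩
    · rw [Finset.sum_const, Finset.card_univ, nsmul_eq_mul,
        mul_inv_cancel₀ (Nat.cast_ne_zero.mpr Fintype.card_ne_zero)]
    · simp only [typeIErrVal, sub_self, Matrix.zero_mul, Matrix.trace_zero, Complex.zero_re,
        mul_zero, Finset.sum_const_zero]
      exact hε
  · rintro v ⟨r, S, hr, hS, hI, rfl⟩
    let q' : Xin × Xaux → ℝ := fun x => ∑ xo, r (xo, x.2) * p xo x.1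
    have hq'x : ∀ x, q' x = ∑ xo, r (xo, x.2) * p xo x.1 := fun _ => rfl
    have hcnn : ∀ (x : Xin × Xaux) (xo : Xout), 0 ≤ r (xo, x.2) * p xo x.1 :=
      fun x xo => mul_nonneg (hr.1 _) ((hp xo).1 _)
    have hq'nn : ∀ x, 0 ≤ q' x := fun x => Finset.sum_nonneg fun xo _ => hcnn x xo
    let T' : Xin × Xaux → Matrix (din × daux) (din × daux) ℂ := fun x =>
      if _ : q' x = 0 then 0 else
        ((q' x : ℝ) : ℂ)⁻¹ • ∑ xo, ((r (xo, x.2) * p xo x.1 : ℝ) : ℂ) •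
          adjMap (tensorIdLin (N x.1 xo) daux) (S (xo, x.2))
    have hT'x : ∀ x, T' x = if _ : q' x = 0 then 0 else
        ((q' x : ℝ) : ℂ)⁻¹ • ∑ xo, ((r (xo, x.2) * p xo x.1 : ℝ) : ℂ) •
          adjMap (tensorIdLin (N x.1 xo) daux) (S (xo, x.2)) := fun _ => rfl
    have hzero : ∀ x : Xin × Xaux, q' x = 0 → ∀ xo, r (xo, x.2) * p xo x.1 = 0 := by
      intro x hx xo
      exact (Finset.sum_eq_zero_iff_of_nonneg (fun xo _ => hcnn x xo)).mp hx xo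
        (Finset.mem_univ xo)
    have key : ∀ x : Xin × Xaux, ((q' x : ℝ) : ℂ) • T' x
        = ∑ xo, ((r (xo, x.2) * p xo x.1 : ℝ) : ℂ) •
            adjMap (tensorIdLin (N x.1 xo) daux) (S (xo, x.2)) := by
      intro x
      by_cases h : q' x = 0
      · rw [hT'x, dif_pos h, smul_zero, eq_comm]
        exact Finset.sum_eq_zero fun xo _ => by
          rw [hzero x h xo, Complex.ofReal_zero, zero_smul]
      · rw [hT'x, dif_neg h, smul_smul, mul_inv_cancel₀ (by exact_mod_cast h), one_smul]
    have lhs1 : ∀ (Φ : Xin × Xaux → Matrix (din × daux) (din × daux) ℂ) (x : Xin × Xaux),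
        ((q' x : ℝ) : ℂ) * (T' x * Φ x).trace
          = ∑ xo, ((r (xo, x.2) * p xo x.1 : ℝ) : ℂ) *
              (S (xo, x.2) * tensorIdMap (N x.1 xo) daux (Φ x)).trace := by
      intro Φ x
      rw [← smul_eq_mul, ← Matrix.trace_smul, ← Matrix.smul_mul, key x, Matrix.sum_mul,
        Matrix.trace_sum]
      exact Finset.sum_congr rfl fun xo _ => by
        rw [Matrix.smul_mul, Matrix.trace_smul, smul_eq_mul, adjMap_trace, tensorIdLin_apply]
    have rhs1 : ∀ (Φ : Xin × Xaux → Matrix (din × daux) (din × daux) ℂ) (y : Xout × Xaux),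
        ((r y : ℝ) : ℂ) * (S y * superAct p N Φ y).trace
          = ∑ xi, ((r y * p y.1 xi : ℝ) : ℂ) *
              (S y * tensorIdMap (N xi y.1) daux (Φ (xi, y.2))).trace := by
      intro Φ y
      rw [show superAct p N Φ y
          = ∑ xi, p y.1 xi • tensorIdMap (N xi y.1) daux (Φ (xi, y.2)) from rfl,
        Matrix.mul_sum, Matrix.trace_sum, Finset.mul_sum]
      exact Finset.sum_congr rfl fun xi _ => by
        rw [Matrix.mul_smul, Matrix.trace_smul, Complex.real_smul, Complex.ofReal_mul]
        ring
    have coreC : ∀ Φ : Xin × Xaux → Matrix (din × daux) (din × daux) ℂ,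
        ∑ x : Xin × Xaux, ((q' x : ℝ) : ℂ) * (T' x * Φ x).trace
          = ∑ y : Xout × Xaux, ((r y : ℝ) : ℂ) * (S y * superAct p N Φ y).trace := by
      intro Φ
      calc ∑ x : Xin × Xaux, ((q' x : ℝ) : ℂ) * (T' x * Φ x).trace
          = ∑ x : Xin × Xaux, ∑ xo, ((r (xo, x.2) * p xo x.1 : ℝ) : ℂ) *
              (S (xo, x.2) * tensorIdMap (N x.1 xo) daux (Φ x)).trace :=
            Finset.sum_congr rfl fun x _ => lhs1 Φ x
        _ = ∑ xi : Xin, ∑ xa : Xaux, ∑ xo : Xout, ((r (xo, xa) * p xo xi : ℝ) : ℂ) *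
              (S (xo, xa) * tensorIdMap (N xi xo) daux (Φ (xi, xa))).trace := by
            rw [Fintype.sum_prod_type]
        _ = ∑ xi : Xin, ∑ xo : Xout, ∑ xa : Xaux, ((r (xo, xa) * p xo xi : ℝ) : ℂ) *
              (S (xo, xa) * tensorIdMap (N xi xo) daux (Φ (xi, xa))).trace :=
            Finset.sum_congr rfl fun _ _ => Finset.sum_comm
        _ = ∑ xo : Xout, ∑ xi : Xin, ∑ xa : Xaux, ((r (xo, xa) * p xo xi : ℝ) : ℂ) *
              (S (xo, xa) * tensorIdMap (N xi xo) daux (Φ (xi, xa))).trace :=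
            Finset.sum_comm
        _ = ∑ xo : Xout, ∑ xa : Xaux, ∑ xi : Xin, ((r (xo, xa) * p xo xi : ℝ) : ℂ) *
              (S (xo, xa) * tensorIdMap (N xi xo) daux (Φ (xi, xa))).trace :=
            Finset.sum_congr rfl fun _ _ => Finset.sum_comm
        _ = ∑ y : Xout × Xaux, ∑ xi : Xin, ((r y * p y.1 xi : ℝ) : ℂ) *
              (S y * tensorIdMap (N xi y.1) daux (Φ (xi, y.2))).trace := by
            rw [Fintype.sum_prod_type]
        _ = ∑ y : Xout × Xaux, ((r y : ℝ) : ℂ) * (S y * superAct p N Φ y).trace :=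
            Finset.sum_congr rfl fun y _ => (rhs1 Φ y).symm
    have coreR : ∀ Φ : Xin × Xaux → Matrix (din × daux) (din × daux) ℂ,
        ∑ x : Xin × Xaux, q' x * (T' x * Φ x).trace.re
          = ∑ y : Xout × Xaux, r y * (S y * superAct p N Φ y).trace.re := by
      intro Φ
      have := congrArg Complex.re (coreC Φ)
      simpa only [Complex.re_sum, Complex.re_ofReal_mul] using this
    have hq'sum : ∑ x : Xin × Xaux, q' x = 1 := by
      calc ∑ x : Xin × Xaux, q' x
          = ∑ xi : Xin, ∑ xa : Xaux, ∑ xo : Xout, r (xo, xa) * p xo xi := by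
            rw [Fintype.sum_prod_type]
        _ = ∑ xi : Xin, ∑ xo : Xout, ∑ xa : Xaux, r (xo, xa) * p xo xi :=
            Finset.sum_congr rfl fun _ _ => Finset.sum_comm
        _ = ∑ xo : Xout, ∑ xi : Xin, ∑ xa : Xaux, r (xo, xa) * p xo xi := Finset.sum_comm
        _ = ∑ xo : Xout, ∑ xa : Xaux, ∑ xi : Xin, r (xo, xa) * p xo xi :=
            Finset.sum_congr rfl fun _ _ => Finset.sum_comm
        _ = ∑ xo : Xout, ∑ xa : Xaux, r (xo, xa) := by
            refine Finset.sum_congr rfl fun xo _ => Finset.sum_congr rfl fun xa _ => ?_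
            rw [← Finset.mul_sum, (hp xo).2, mul_one]
        _ = ∑ y : Xout × Xaux, r y := by rw [Fintype.sum_prod_type]
        _ = 1 := hr.2
    have hPOVM : ∀ x, IsPOVMElem (T' x) := by
      intro x
      by_cases h : q' x = 0
      · rw [hT'x, dif_pos h]
        exact ⟨Matrix.PosSemidef.zero, by rw [sub_zero]; exact Matrix.PosSemidef.one⟩
      · constructor
        · rw [hT'x, dif_neg h, show ((q' x : ℝ) : ℂ)⁻¹ = (((q' x)⁻¹ : ℝ) : ℂ) from
            (Complex.ofReal_inv _).symm]
          refine psd_smul_real (inv_nonneg.mpr (hq'nn x)) (psd_sum _ _ fun xo _ => ?_)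
          exact psd_smul_real (hcnn x xo)
            (adjMap_posSemidef _ (fun M hM => tensorIdMap_posSemidef (N x.1 xo)
              (hN x.1 xo) hM) (hS (xo, x.2)).1)
        · have e : (1 : Matrix (din × daux) (din × daux) ℂ) - T' x
              = (((q' x)⁻¹ : ℝ) : ℂ) • ∑ xo, ((r (xo, x.2) * p xo x.1 : ℝ) : ℂ) •
                  adjMap (tensorIdLin (N x.1 xo) daux) (1 - S (xo, x.2)) := by
            have hone : ∀ xo : Xout,
                adjMap (tensorIdLin (N x.1 xo) daux) (1 - S (xo, x.2))
                  = 1 - adjMap (tensorIdLin (N x.1 xo) daux) (S (xo, x.2)) := by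
              intro xo
              rw [adjMap_sub, adjMap_one _ (fun M => tensorIdMap_trace _
                (fun M' => (hN x.1 xo).2 M') M)]
            simp_rw [hone, smul_sub, Finset.sum_sub_distrib, ← Finset.sum_smul]
            rw [show (∑ xo, ((r (xo, x.2) * p xo x.1 : ℝ) : ℂ)) = ((q' x : ℝ) : ℂ) by
              rw [hq'x, Complex.ofReal_sum]]
            rw [smul_sub, smul_smul, ← Complex.ofReal_mul, inv_mul_cancel₀ h,
              Complex.ofReal_one, one_smul]
            congr 1
            rw [hT'x, dif_neg h, show ((q' x : ℝ) : ℂ)⁻¹ = (((q' x)⁻¹ : ℝ) : ℂ) from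
              (Complex.ofReal_inv _).symm]
          rw [e]
          refine psd_smul_real (inv_nonneg.mpr (hq'nn x)) (psd_sum _ _ fun xo _ => ?_)
          exact psd_smul_real (hcnn x xo)
            (adjMap_posSemidef _ (fun M hM => tensorIdMap_posSemidef (N x.1 xo)
              (hN x.1 xo) hM) (hS (xo, x.2)).2)
    have hsuper_tr : ∀ y, (superAct p N Φ₁ y).trace = 1 := by
      intro y
      rw [show superAct p N Φ₁ y
          = ∑ xi, p y.1 xi • tensorIdMap (N xi y.1) daux (Φ₁ (xi, y.2)) from rfl,
        Matrix.trace_sum]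
      have : ∀ xi, (p y.1 xi • tensorIdMap (N xi y.1) daux (Φ₁ (xi, y.2))).trace
          = ((p y.1 xi : ℝ) : ℂ) := by
        intro xi
        rw [Matrix.trace_smul, tensorIdMap_trace _ (fun M => (hN xi y.1).2 M),
          (hΦ₁ (xi, y.2)).2, Complex.real_smul, mul_one]
      simp_rw [this]
      rw [← Complex.ofReal_sum, (hp y.1).2, Complex.ofReal_one]
    have hTypeI : typeIErrVal Φ₁ q' T' ≤ ε := by
      rw [typeI_split Φ₁ (fun x => (hΦ₁ x).2) q' T', hq'sum, coreR Φ₁]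
      rw [typeI_split (superAct p N Φ₁) hsuper_tr r S, hr.2] at hI
      linarith
    exact ⟨q', T', ⟨hq'nn, hq'sum⟩, hPOVM, hTypeI, (coreR Φ₂).symm⟩

end CQ
end
end
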